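/- Let Γ be a locally-finite reflexive vertex-transitive relation on an infinite set V with some finite nonempty set having finite boundary, and let A be a weak atom of Γ. Then the induced subgraph Γ[A] is vertex-transitive, and every vertex of V belongs to some weak atom. -/

import Mathlib

open Set Pointwise

variable {V : Type*}

/-- Image of a set under the relation. -/
def img (Γ : V → Set V) (F : Set V) : Set V := ⋃ x ∈ F, Γ x
/-- Reverse relation. -/
def rev (Γ : V → Set V) : V → Set V := fun y => {x | y ∈ Γ x}
/-- Boundary ∂(F) = Γ(F) \ F. -/
def bd (Γ : V → Set V) (F : Set V) : Set V := img Γ F \ F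
/-- ∇(F) = V \ (F ∪ Γ(F)). -/
def nab (Γ : V → Set V) (F : Set V) : Set V := (F ∪ img Γ F)ᶜ
/-- Reflexive relation. -/
def Refl (Γ : V → Set V) : Prop := ∀ x, x ∈ Γ x
/-- Locally finite relation. -/
def LocFin (Γ : V → Set V) : Prop := ∀ x, (Γ x).Finite
/-- Automorphism of the relation. -/
def IsAuto (Γ : V → Set V) (φ : V ≃ V) : Prop := ∀ x, Γ (φ x) = φ '' Γ x
/-- Vertex-transitivity. -/
def VT (Γ : V → Set V) : Prop := ∀ x y : V, ∃ φ : V ≃ V, IsAuto Γ φ ∧ φ x = y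
/-- A finite v-Moser set. -/
def MoserSet (Γ : V → Set V) (v : V) (F : Set V) : Prop :=
  F.Finite ∧ v ∈ F ∧ rev Γ v ∩ F = {v}
/-- μ(v): minimum boundary size over v-Moser sets. -/
noncomputable def mu (Γ : V → Set V) (v : V) : ℕ :=
  sInf {n | ∃ F, MoserSet Γ v F ∧ (bd Γ F).ncard = n}
/-- A v-molecule: Moser set of minimum boundary. -/
def Molecule (Γ : V → Set V) (v : V) (F : Set V) : Prop :=
  MoserSet Γ v F ∧ (bd Γ F).ncard = mu Γ v
/-- The v-kernel: the unique minimal v-molecule. -/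
def IsKernel (Γ : V → Set V) (v : V) (K : Set V) : Prop :=
  Molecule Γ v K ∧ ∀ F, Molecule Γ v F → K ⊆ F
/-- Weak connectivity κ₀. -/
noncomputable def kappa0 (Γ : V → Set V) : ℕ :=
  sInf {n | ∃ X : Set V, X.Finite ∧ X.Nonempty ∧ (bd Γ X).ncard = n}
/-- Weak fragment. -/
def WeakFragment (Γ : V → Set V) (X : Set V) : Prop :=
  X.Finite ∧ X.Nonempty ∧ (bd Γ X).ncard = kappa0 Γ
/-- Weak atom: a weak fragment of minimum cardinality. -/
def WeakAtom (Γ : V → Set V) (X : Set V) : Prop :=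
  WeakFragment Γ X ∧ ∀ Y, WeakFragment Γ Y → X.ncard ≤ Y.ncard

/-- Induced subrelation on a subset. -/
def restrict (Γ : V → Set V) (A : Set V) : A → Set A := fun x => {y | (y : V) ∈ Γ x}

lemma img_finite (Γ : V → Set V) (hlf : LocFin Γ) {X : Set V} (hX : X.Finite) :
    (img Γ X).Finite := hX.biUnion (fun x _ => hlf x)

lemma bd_finite (Γ : V → Set V) (hlf : LocFin Γ) {X : Set V} (hX : X.Finite) :
    (bd Γ X).Finite := (img_finite Γ hlf hX).diff

lemma kappa0_le (Γ : V → Set V) {X : Set V} (hX : X.Finite) (hXne : X.Nonempty) :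
    kappa0 Γ ≤ (bd Γ X).ncard := Nat.sInf_le ⟨X, hX, hXne, rfl⟩

lemma bd_inter_union_subset (Γ : V → Set V) (X Y : Set V) :
    bd Γ (X ∩ Y) ∪ bd Γ (X ∪ Y) ⊆ bd Γ X ∪ bd Γ Y := by
  rintro z (⟨hz, hnz⟩ | ⟨hz, hnz⟩)
  · simp only [img, mem_iUnion₂, mem_inter_iff] at hz
    obtain ⟨x, ⟨hx, hy⟩, hzx⟩ := hz
    rcases (by tauto : z ∉ X ∨ z ∉ Y) with h | h
    · exact Or.inl ⟨mem_iUnion₂.2 ⟨x, hx, hzx⟩, h⟩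
    · exact Or.inr ⟨mem_iUnion₂.2 ⟨x, hy, hzx⟩, h⟩
  · simp only [img, mem_iUnion₂, mem_union] at hz
    obtain ⟨x, hx | hx, hzx⟩ := hz
    · exact Or.inl ⟨mem_iUnion₂.2 ⟨x, hx, hzx⟩, fun h => hnz (Or.inl h)⟩
    · exact Or.inr ⟨mem_iUnion₂.2 ⟨x, hx, hzx⟩, fun h => hnz (Or.inr h)⟩

lemma bd_inter_inter_subset (Γ : V → Set V) (X Y : Set V) :
    bd Γ (X ∩ Y) ∩ bd Γ (X ∪ Y) ⊆ bd Γ X ∩ bd Γ Y := by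
  rintro z ⟨⟨hz1, _⟩, ⟨_, hnz⟩⟩
  simp only [img, mem_iUnion₂, mem_inter_iff] at hz1
  obtain ⟨x, ⟨hx, hy⟩, hzx⟩ := hz1
  exact ⟨⟨mem_iUnion₂.2 ⟨x, hx, hzx⟩, fun h => hnz (Or.inl h)⟩,
    ⟨mem_iUnion₂.2 ⟨x, hy, hzx⟩, fun h => hnz (Or.inr h)⟩⟩

lemma submod (Γ : V → Set V) (hlf : LocFin Γ) {X Y : Set V} (hX : X.Finite) (hY : Y.Finite) :
    (bd Γ (X ∩ Y)).ncard + (bd Γ (X ∪ Y)).ncard ≤ (bd Γ X).ncard + (bd Γ Y).ncard := by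
  have hfs : (bd Γ (X ∩ Y)).Finite := bd_finite Γ hlf (hX.inter_of_left Y)
  have hft : (bd Γ (X ∪ Y)).Finite := bd_finite Γ hlf (hX.union hY)
  have hfa : (bd Γ X).Finite := bd_finite Γ hlf hX
  have hfb : (bd Γ Y).Finite := bd_finite Γ hlf hY
  rw [← Set.ncard_union_add_ncard_inter _ _ hfs hft, ← Set.ncard_union_add_ncard_inter _ _ hfa hfb]
  exact Nat.add_le_add
    (Set.ncard_le_ncard (bd_inter_union_subset Γ X Y) (hfa.union hfb))
    (Set.ncard_le_ncard (bd_inter_inter_subset Γ X Y) (hfa.inter_of_left _))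

lemma img_image (Γ : V → Set V) {φ : V ≃ V} (hφ : IsAuto Γ φ) (X : Set V) :
    img Γ (φ '' X) = φ '' img Γ X := by
  unfold img
  rw [biUnion_image, image_iUnion₂]
  exact iUnion₂_congr fun x _ => hφ x

lemma bd_image (Γ : V → Set V) {φ : V ≃ V} (hφ : IsAuto Γ φ) (X : Set V) :
    bd Γ (φ '' X) = φ '' bd Γ X := by
  unfold bd
  rw [img_image Γ hφ, ← image_diff φ.injective]

lemma fragment_image (Γ : V → Set V) {φ : V ≃ V} (hφ : IsAuto Γ φ) {X : Set V}
    (hX : WeakFragment Γ X) : WeakFragment Γ (φ '' X) := by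
  refine ⟨hX.1.image φ, hX.2.1.image φ, ?_⟩
  rw [bd_image Γ hφ, Set.ncard_image_of_injective _ φ.injective, hX.2.2]

lemma atom_image (Γ : V → Set V) {φ : V ≃ V} (hφ : IsAuto Γ φ) {X : Set V}
    (hX : WeakAtom Γ X) : WeakAtom Γ (φ '' X) := by
  refine ⟨fragment_image Γ hφ hX.1, fun Y hY => ?_⟩
  rw [Set.ncard_image_of_injective _ φ.injective]
  exact hX.2 Y hY

lemma atom_eq (Γ : V → Set V) (hlf : LocFin Γ) {A B : Set V} (hA : WeakAtom Γ A)
    (hB : WeakAtom Γ B) (hAB : (A ∩ B).Nonempty) : A = B := by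
  obtain ⟨⟨hAf, hAne, hAbd⟩, hAmin⟩ := hA
  obtain ⟨⟨hBf, hBne, hBbd⟩, hBmin⟩ := hB
  have hU : kappa0 Γ ≤ (bd Γ (A ∪ B)).ncard :=
    kappa0_le Γ (hAf.union hBf) (hAne.mono subset_union_left)
  have hI : kappa0 Γ ≤ (bd Γ (A ∩ B)).ncard :=
    kappa0_le Γ (hAf.inter_of_left B) hAB
  have hsub := submod Γ hlf hAf hBf
  rw [hAbd, hBbd] at hsub
  have hfragI : WeakFragment Γ (A ∩ B) :=
    ⟨hAf.inter_of_left B, hAB, le_antisymm (by omega) hI⟩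
  have h1 : A ∩ B = A :=
    Set.eq_of_subset_of_ncard_le inter_subset_left (hAmin _ hfragI) hAf
  have h2 : A ∩ B = B :=
    Set.eq_of_subset_of_ncard_le inter_subset_right (hBmin _ hfragI) hBf
  exact h1.symm.trans h2



/-- The induced graph on a weak atom is vertex-transitive, and every vertex
belongs to some weak atom. -/
theorem stmt12 {V : Type*} [Infinite V] (Γ : V → Set V) (hlf : LocFin Γ) (hr : Refl Γ)
    (hvt : VT Γ) (hfin : ∃ X : Set V, X.Finite ∧ X.Nonempty ∧ (bd Γ X).Finite)
    (A : Set V) (hA : WeakAtom Γ A) :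
    VT (restrict Γ A) ∧ ∀ v : V, ∃ B : Set V, WeakAtom Γ B ∧ v ∈ B := by
  have hAf := hA.1.1
  have hAne := hA.1.2.1
  constructor
  · intro x y
    obtain ⟨φ, hφ, hφx⟩ := hvt x y
    have hatom : WeakAtom Γ (φ '' A) := atom_image Γ hφ hA
    have hEq : φ '' A = A :=
      atom_eq Γ hlf hatom hA ⟨(y : V), ⟨(x : V), x.2, hφx⟩, y.2⟩
    have hiff : ∀ a : V, a ∈ A ↔ φ a ∈ A := by
      intro a
      constructor
      · intro ha; rw [← hEq]; exact ⟨a, ha, rfl⟩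
      · intro ha; rw [← hEq] at ha; obtain ⟨b, hb, hba⟩ := ha
        rwa [← φ.injective hba]
    refine ⟨φ.subtypeEquiv hiff, ?_, ?_⟩
    · intro z
      ext w
      have hrw : Γ (φ (z : V)) = φ '' Γ (z : V) := hφ (z : V)
      simp only [_root_.restrict, mem_setOf_eq, Equiv.subtypeEquiv_apply, hrw, mem_image]
      constructor
      · rintro ⟨u, hu, huw⟩
        have huA : u ∈ A := (hiff u).2 (by rw [huw]; exact w.2)
        exact ⟨⟨u, huA⟩, hu, Subtype.ext huw⟩
      · rintro ⟨⟨u, huA⟩, hu, huw⟩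
        exact ⟨u, hu, congrArg Subtype.val huw⟩
    · exact Subtype.ext hφx
  · intro v
    obtain ⟨a, ha⟩ := hAne
    obtain ⟨φ, hφ, hφa⟩ := hvt a v
    exact ⟨φ '' A, atom_image Γ hφ hA, ⟨a, ha, hφa⟩⟩
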